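/- Let v₁, …, v₁₃ be the vectors in ℝ³ given by v₁=(1,0,0), v₂=(0,1,0), v₃=(0,0,1), v₄=(0,1,1), v₅=(0,1,−1), v₆=(1,0,1), v₇=(1,0,−1), v₈=(1,1,0), v₉=(1,−1,0), v₁₀=(1,1,1), v₁₁=(−1,1,1), v₁₂=(1,−1,1), v₁₃=(1,1,−1), and let YO³₁₃ be the simple graph on Fin 13 in which distinct i, j are adjacent iff the dot product of vᵢ and vⱼ is 0. Then: (a) the chromatic number of YO³₁₃ equals 4; and (b) any two distinct vertices of YO³₁₃ are adjacent or have a common neighbor, i.e. YO³₁₃ has diameter at most 2 (and it is not complete, so its diameter is exactly 2). -/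

import Mathlib

set_option maxRecDepth 20000


/-- The orthogonality graph of a finite list of vectors in `ℝ^d`: distinct indices
are adjacent iff the corresponding vectors have dot product `0`. -/
def orthoGraph {m d : ℕ} (v : Fin m → Fin d → ℝ) : SimpleGraph (Fin m) where
  Adj i j := i ≠ j ∧ ∑ a, v i a * v j a = 0
  symm := by
    constructor
    rintro i j ⟨hne, hdot⟩
    refine ⟨hne.symm, ?_⟩
    rw [Finset.sum_congr rfl fun a _ => mul_comm (v j a) (v i a)]
    exact hdot
  loopless := by constructor; rintro i ⟨h, -⟩; exact h rfl

/-- The 13 vectors of the Yu–Oh state-independent contextuality proof in `ℝ³`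
(index `i : Fin 13` corresponds to `v_{i+1}`). -/
def yuOhVecs : Fin 13 → Fin 3 → ℝ :=
  ![![1, 0, 0], ![0, 1, 0], ![0, 0, 1], ![0, 1, 1], ![0, 1, -1], ![1, 0, 1],
    ![1, 0, -1], ![1, 1, 0], ![1, -1, 0], ![1, 1, 1], ![-1, 1, 1], ![1, -1, 1],
    ![1, 1, -1]]

def iv : Fin 13 → Fin 3 → ℤ :=
  ![![1, 0, 0], ![0, 1, 0], ![0, 0, 1], ![0, 1, 1], ![0, 1, -1], ![1, 0, 1],
    ![1, 0, -1], ![1, 1, 0], ![1, -1, 0], ![1, 1, 1], ![-1, 1, 1], ![1, -1, 1],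
    ![1, 1, -1]]

lemma cast_iv : ∀ i a, ((iv i a : ℤ) : ℝ) = yuOhVecs i a := by
  intro i a
  fin_cases i <;> fin_cases a <;> norm_num [iv, yuOhVecs]

def P (i j : Fin 13) : Prop := i ≠ j ∧ (∑ a, iv i a * iv j a) = 0

instance : DecidablePred fun p : Fin 13 × Fin 13 => P p.1 p.2 := fun _ => by
  unfold P; infer_instance

instance (i j : Fin 13) : Decidable (P i j) := by unfold P; infer_instance

lemma adj_iff (i j : Fin 13) : (orthoGraph yuOhVecs).Adj i j ↔ P i j := by
  have hsum : (∑ a, yuOhVecs i a * yuOhVecs j a)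
      = ((∑ a, iv i a * iv j a : ℤ) : ℝ) := by
    push_cast
    exact Finset.sum_congr rfl fun a _ => by rw [cast_iv, cast_iv]
  show (i ≠ j ∧ _) ↔ _
  rw [hsum, P]
  constructor
  · rintro ⟨h1, h2⟩; exact ⟨h1, by exact_mod_cast h2⟩
  · rintro ⟨h1, h2⟩; exact ⟨h1, by exact_mod_cast h2⟩

theorem key : ∀ c0 c1 c2 c3 c4 c5 c6 c7 c8 : Fin 3,
    (c0 != c1 && c0 != c2 && c1 != c2 && c0 != c3 && c0 != c4 && c3 != c4 &&
     c1 != c5 && c1 != c6 && c5 != c6 && c2 != c7 && c2 != c8 && c7 != c8) = true →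
    ((c4 != c6 && c4 != c8 && c6 != c8) || (c4 != c5 && c4 != c7 && c5 != c7) ||
     (c3 != c6 && c3 != c7 && c6 != c7) || (c3 != c5 && c3 != c8 && c5 != c8)) = true := by
  decide

lemma absurd4 : ∀ x y z w : Fin 3, x ≠ y → x ≠ z → y ≠ z → w ≠ x → w ≠ y → w ≠ z → False := by
  decide

def col : Fin 13 → Fin 4 := ![0, 1, 2, 1, 2, 0, 2, 0, 1, 0, 1, 3, 2]

lemma col_proper : ∀ i j : Fin 13, P i j → col i ≠ col j := by decide

lemma colorable4 : (orthoGraph yuOhVecs).Colorable 4 := by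
  have C : (orthoGraph yuOhVecs).Coloring (Fin 4) :=
    SimpleGraph.Coloring.mk col (fun {i j} h => col_proper i j ((adj_iff i j).mp h))
  simpa using C.colorable

lemma padj : ∀ i j : Fin 13, P i j → (orthoGraph yuOhVecs).Adj i j :=
  fun i j h => (adj_iff i j).mpr h

lemma not_colorable3 : ¬ (orthoGraph yuOhVecs).Colorable 3 := by
  rintro ⟨C⟩
  have hv : ∀ i j : Fin 13, P i j → C i ≠ C j := fun i j h => C.valid (padj i j h)
  have hb : ∀ i j : Fin 13, P i j → (C i != C j) = true := fun i j h =>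
    bne_iff_ne.mpr (hv i j h)
  have h := key (C 0) (C 1) (C 2) (C 3) (C 4) (C 5) (C 6) (C 7) (C 8)
    (by simp only [Bool.and_eq_true]
        exact ⟨⟨⟨⟨⟨⟨⟨⟨⟨⟨⟨hb 0 1 (by decide), hb 0 2 (by decide)⟩, hb 1 2 (by decide)⟩,
          hb 0 3 (by decide)⟩, hb 0 4 (by decide)⟩, hb 3 4 (by decide)⟩,
          hb 1 5 (by decide)⟩, hb 1 6 (by decide)⟩, hb 5 6 (by decide)⟩,
          hb 2 7 (by decide)⟩, hb 2 8 (by decide)⟩, hb 7 8 (by decide)⟩)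
  simp only [Bool.or_eq_true, Bool.and_eq_true, bne_iff_ne] at h
  rcases h with ((⟨⟨h1, h2⟩, h3⟩ | ⟨⟨h1, h2⟩, h3⟩) | ⟨⟨h1, h2⟩, h3⟩) | ⟨⟨h1, h2⟩, h3⟩
  · exact absurd4 _ _ _ (C 9) h1 h2 h3 (hv 9 4 (by decide)) (hv 9 6 (by decide)) (hv 9 8 (by decide))
  · exact absurd4 _ _ _ (C 10) h1 h2 h3 (hv 10 4 (by decide)) (hv 10 5 (by decide)) (hv 10 7 (by decide))
  · exact absurd4 _ _ _ (C 11) h1 h2 h3 (hv 11 3 (by decide)) (hv 11 6 (by decide)) (hv 11 7 (by decide))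
  · exact absurd4 _ _ _ (C 12) h1 h2 h3 (hv 12 3 (by decide)) (hv 12 5 (by decide)) (hv 12 8 (by decide))

lemma chrom4 : (orthoGraph yuOhVecs).chromaticNumber = 4 := by
  refine le_antisymm ?_ ?_
  · have := colorable4.chromaticNumber_le
    simpa using this
  · by_contra h
    push_neg at h
    have h3 : (orthoGraph yuOhVecs).chromaticNumber ≤ 3 := by
      exact Order.le_of_lt_add_one (lt_of_lt_of_eq h (by norm_num))
    rw [show ((3 : ℕ∞)) = ((3 : ℕ) : ℕ∞) by norm_num,
      SimpleGraph.chromaticNumber_le_iff_colorable] at h3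
    exact not_colorable3 h3

lemma diam2aux : ∀ i j : Fin 13, i ≠ j → (P i j ∨ ∃ k : Fin 13, P i k ∧ P k j) := by decide

/-- The orthogonality graph `YO³₁₃` of the 13 Yu–Oh vectors has
chromatic number `4`; any two distinct vertices are adjacent or share a common
neighbor (diameter at most 2); and the graph is not complete (so its diameter is
exactly 2). -/
theorem stmt_12 :
    (orthoGraph yuOhVecs).chromaticNumber = 4 ∧
    (∀ i j : Fin 13, i ≠ j →
      ((orthoGraph yuOhVecs).Adj i j ∨
        ∃ k : Fin 13, (orthoGraph yuOhVecs).Adj i k ∧ (orthoGraph yuOhVecs).Adj k j)) ∧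
    (∃ i j : Fin 13, i ≠ j ∧ ¬ (orthoGraph yuOhVecs).Adj i j) ∧
    (orthoGraph yuOhVecs).ediam = 2 := by
  have hdiam : ∀ i j : Fin 13, i ≠ j →
      ((orthoGraph yuOhVecs).Adj i j ∨
        ∃ k : Fin 13, (orthoGraph yuOhVecs).Adj i k ∧ (orthoGraph yuOhVecs).Adj k j) := by
    intro i j hne
    rcases diam2aux i j hne with h | ⟨k, h1, h2⟩
    · exact Or.inl (padj i j h)
    · exact Or.inr ⟨k, padj i k h1, padj k j h2⟩
  have hna : ¬ (orthoGraph yuOhVecs).Adj 0 5 := by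
    rw [adj_iff]; decide
  refine ⟨chrom4, hdiam, ⟨0, 5, by decide, hna⟩, ?_⟩
  refine le_antisymm (SimpleGraph.ediam_le_of_edist_le ?_) ?_
  · intro u v
    by_cases huv : u = v
    · subst huv; simp [SimpleGraph.edist_self]
    · rcases hdiam u v huv with h | ⟨k, h1, h2⟩
      · calc (orthoGraph yuOhVecs).edist u v = 1 := SimpleGraph.edist_eq_one_iff_adj.mpr h
          _ ≤ 2 := by norm_num
      · have := SimpleGraph.edist_le
          (SimpleGraph.Walk.cons h1 (SimpleGraph.Walk.cons h2 SimpleGraph.Walk.nil))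
        simpa using this
  · have h0 : (orthoGraph yuOhVecs).edist 0 5 ≠ 0 := by
      simp [SimpleGraph.edist_eq_zero_iff]
    have h1 : (orthoGraph yuOhVecs).edist 0 5 ≠ 1 := fun h =>
      hna (SimpleGraph.edist_eq_one_iff_adj.mp h)
    have h2 : 2 ≤ (orthoGraph yuOhVecs).edist 0 5 := by
      have : 1 < (orthoGraph yuOhVecs).edist 0 5 :=
        lt_of_le_of_ne (ENat.one_le_iff_ne_zero.mpr h0) (Ne.symm h1)
      exact Order.add_one_le_of_lt this
    exact le_trans h2 SimpleGraph.edist_le_ediam
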